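/- Suppose q1, q2 > 0 satisfy Q := 1/q1 + 1/q2 < 1 and Q_{edge,1} := 3/(2q1) + 1/q2 > 1. Then ∫₀^∞ ∫₀^1 ( ∫₀^1 ∫₀^1 ρ(t+u, s−v) ds dt )² dv du < ∞, where ρ(t,s) = (|t|^{q1} + |s|^{q2})^{-1}. -/

import Mathlib

open MeasureTheory Real Set

noncomputable def rho (q1 q2 t s : ℝ) : ℝ := (|t| ^ q1 + |s| ^ q2)⁻¹

/-- continuity of the basic kernel in one variable -/
lemma rho_aux_cont (q2 A : ℝ) (hq2 : 0 < q2) (hA : 0 < A) :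
    Continuous (fun w : ℝ => (A + |w| ^ q2)⁻¹) := by
  have h1 : Continuous fun w : ℝ => |w| ^ q2 :=
    continuous_abs.rpow_const (fun x => Or.inr hq2.le)
  exact (continuous_const.add h1).inv₀ (fun w => (add_pos_of_pos_of_nonneg hA (by positivity)).ne')

/-- Half-line bound: ∫_{(0,1]} (A + |w|^q2)⁻¹ dw ≤ (1 + 1/(q2-1)) A^(1/q2 - 1). -/
lemma half_bound (q2 A : ℝ) (hq2 : 1 < q2) (hA : 0 < A) :
    ∫ w in Ioc (0:ℝ) 1, (A + |w| ^ q2)⁻¹ ≤ (1 + 1/(q2-1)) * A ^ (1/q2 - 1) := by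
  set f : ℝ → ℝ := fun w => (A + |w| ^ q2)⁻¹ with hf
  have hc : Continuous f := rho_aux_cont q2 A (by linarith) hA
  have hfnn : ∀ w, 0 ≤ f w := fun w => by simp only [hf]; positivity
  set r : ℝ := A ^ (1/q2) with hrdef
  have hr : 0 < r := rpow_pos_of_pos hA _
  have int1 : IntegrableOn f (Ioc 0 r) := hc.integrableOn_Ioc
  have intr : IntegrableOn (fun w : ℝ => w ^ (-q2)) (Ioi r) :=
    integrableOn_Ioi_rpow_of_lt (by linarith) hr
  have hptw : ∀ w ∈ Ioi r, f w ≤ w ^ (-q2) := by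
    intro w hw
    have hw0 : 0 < w := lt_trans hr hw
    have habs : |w| = w := abs_of_pos hw0
    have h1 : 0 < w ^ q2 := rpow_pos_of_pos hw0 _
    have h2 : w ^ q2 ≤ A + |w| ^ q2 := by rw [habs]; linarith
    have := inv_anti₀ h1 h2
    rwa [rpow_neg hw0.le]
  have int2 : IntegrableOn f (Ioi r) := by
    apply intr.mono' (hc.aestronglyMeasurable.restrict)
    filter_upwards [ae_restrict_mem measurableSet_Ioi] with w hw
    have hw0 : 0 < w := lt_trans hr hw
    rw [Real.norm_eq_abs, abs_of_nonneg (hfnn w)]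
    exact hptw w hw
  have hsub : Ioc (0:ℝ) 1 ⊆ Ioc 0 r ∪ Ioi r := by
    intro w hw
    rcases le_or_gt w r with h | h
    · exact Or.inl ⟨hw.1, h⟩
    · exact Or.inr h
  have step1 : ∫ w in Ioc (0:ℝ) 1, f w ≤ ∫ w in Ioc 0 r ∪ Ioi r, f w := by
    apply setIntegral_mono_set (int1.union int2)
      (Filter.Eventually.of_forall hfnn) (HasSubset.Subset.eventuallyLE hsub)
  have step2 : ∫ w in Ioc 0 r ∪ Ioi r, f w
      = (∫ w in Ioc 0 r, f w) + ∫ w in Ioi r, f w :=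
    setIntegral_union (Ioc_disjoint_Ioi le_rfl) measurableSet_Ioi int1 int2
  have b1 : ∫ w in Ioc 0 r, f w ≤ A⁻¹ * r := by
    have : ∫ w in Ioc 0 r, f w ≤ ∫ _w in Ioc 0 r, A⁻¹ := by
      apply setIntegral_mono_on int1 (integrableOn_const (by
        simp [Real.volume_Ioc])) measurableSet_Ioc
      intro w _
      have h2 : A ≤ A + |w| ^ q2 := by
        have : (0:ℝ) ≤ |w| ^ q2 := by positivity
        linarith
      exact inv_anti₀ hA h2
    rw [setIntegral_const] at this
    rw [measureReal_def, Real.volume_Ioc] at this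
    rw [ENNReal.toReal_ofReal (by linarith), smul_eq_mul] at this
    linarith [this]
  have b2 : ∫ w in Ioi r, f w ≤ r ^ (1 - q2) / (q2 - 1) := by
    have h1 : ∫ w in Ioi r, f w ≤ ∫ w in Ioi r, w ^ (-q2) :=
      setIntegral_mono_on int2 intr measurableSet_Ioi hptw
    have h2 : ∫ w in Ioi r, w ^ (-q2) = -r ^ (-q2 + 1) / (-q2 + 1) :=
      integral_Ioi_rpow_of_lt (by linarith) hr
    have h3 : -r ^ (-q2 + 1) / (-q2 + 1) = r ^ (1 - q2) / (q2 - 1) := by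
      rw [show -q2 + 1 = 1 - q2 by ring]
      rw [div_eq_div_iff (by linarith) (by linarith)]
      ring
    calc ∫ w in Ioi r, f w ≤ -r ^ (-q2 + 1) / (-q2 + 1) := h2 ▸ h1
      _ = r ^ (1 - q2) / (q2 - 1) := h3
  have key1 : A⁻¹ * r = A ^ (1/q2 - 1) := by
    rw [hrdef, Real.rpow_sub hA, Real.rpow_one]; ring
  have key2 : r ^ (1 - q2) = A ^ (1/q2 - 1) := by
    rw [hrdef, ← Real.rpow_mul hA.le]
    congr 1
    field_simp
  calc ∫ w in Ioc (0:ℝ) 1, f w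
      ≤ (∫ w in Ioc 0 r, f w) + ∫ w in Ioi r, f w := by rw [← step2]; exact step1
    _ ≤ A⁻¹ * r + r ^ (1 - q2) / (q2 - 1) := add_le_add b1 b2
    _ = (1 + 1/(q2-1)) * A ^ (1/q2 - 1) := by
        rw [key1, key2]; field_simp

/-- Bound for the shifted s-integral. -/
lemma s_bound (q2 v A : ℝ) (hq2 : 1 < q2) (hA : 0 < A) (hv : v ∈ Ioc (0:ℝ) 1) :
    ∫ s in Ioc (0:ℝ) 1, (A + |s - v| ^ q2)⁻¹
      ≤ (2 * (1 + 1/(q2-1))) * A ^ (1/q2 - 1) := by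
  set f : ℝ → ℝ := fun w => (A + |w| ^ q2)⁻¹ with hf
  have hc : Continuous f := rho_aux_cont q2 A (by linarith) hA
  have hfnn : ∀ w, 0 ≤ f w := fun w => by simp only [hf]; positivity
  have hv0 : 0 < v := hv.1
  have hv1 : v ≤ 1 := hv.2
  have int01 : IntegrableOn f (Ioc 0 1) := hc.integrableOn_Ioc
  have shift : ∫ s in Ioc (0:ℝ) 1, f (s - v) = ∫ w in Ioc (-v) (1-v), f w := by
    rw [← intervalIntegral.integral_of_le (by norm_num : (0:ℝ) ≤ 1),
      intervalIntegral.integral_comp_sub_right f v,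
      intervalIntegral.integral_of_le (by linarith : (0:ℝ) - v ≤ 1 - v)]
    norm_num
  have split : Ioc (-v) (1-v) = Ioc (-v) 0 ∪ Ioc 0 (1-v) :=
    (Ioc_union_Ioc_eq_Ioc (by linarith) (by linarith)).symm
  have intA : IntegrableOn f (Ioc (-v) 0) := hc.integrableOn_Ioc
  have intB : IntegrableOn f (Ioc 0 (1-v)) := hc.integrableOn_Ioc
  have hneg : ∫ w in Ioc (-v) 0, f w ≤ ∫ w in Ioc (0:ℝ) 1, f w := by
    have h1 : ∫ w in Ioc (-v) 0, f w = ∫ w in Ioc 0 v, f w := by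
      rw [← intervalIntegral.integral_of_le (by linarith : -v ≤ (0:ℝ)),
        ← intervalIntegral.integral_of_le hv0.le]
      have h2 : ∀ x : ℝ, f (-x) = f x := fun x => by simp [hf, abs_neg]
      calc ∫ x in (-v)..0, f x = ∫ x in (0:ℝ)..v, f (-x) := by
            rw [intervalIntegral.integral_comp_neg f]; norm_num
        _ = ∫ x in (0:ℝ)..v, f x := by simp_rw [h2]
    rw [h1]
    exact setIntegral_mono_set int01 (Filter.Eventually.of_forall hfnn)
      (HasSubset.Subset.eventuallyLE (Ioc_subset_Ioc_right hv1))
  have hpos : ∫ w in Ioc 0 (1-v), f w ≤ ∫ w in Ioc (0:ℝ) 1, f w :=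
    setIntegral_mono_set int01 (Filter.Eventually.of_forall hfnn)
      (HasSubset.Subset.eventuallyLE (Ioc_subset_Ioc_right (by linarith)))
  have hb := half_bound q2 A hq2 hA
  calc ∫ s in Ioc (0:ℝ) 1, f (s - v) = ∫ w in Ioc (-v) (1-v), f w := shift
    _ = (∫ w in Ioc (-v) 0, f w) + ∫ w in Ioc 0 (1-v), f w := by
        rw [split]
        exact setIntegral_union (Ioc_disjoint_Ioc_of_le le_rfl) measurableSet_Ioc intA intB
    _ ≤ (∫ w in Ioc (0:ℝ) 1, f w) + ∫ w in Ioc (0:ℝ) 1, f w := add_le_add hneg hpos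
    _ ≤ (2 * (1 + 1/(q2-1))) * A ^ (1/q2 - 1) := by linarith

theorem stmt_5 (q1 q2 : ℝ) (hq1 : 0 < q1) (hq2 : 0 < q2)
    (hQ : 1 / q1 + 1 / q2 < 1) (hE : 1 < 3 / (2 * q1) + 1 / q2) :
    ∫⁻ u in Ioi (0 : ℝ), ∫⁻ v in Ioc (0 : ℝ) 1,
      ENNReal.ofReal ((∫ t in Ioc (0 : ℝ) 1, ∫ s in Ioc (0 : ℝ) 1,
        rho q1 q2 (t + u) (s - v)) ^ 2) < ⊤ := by
  have hq1' : 1 < q1 := by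
    have h2 : 0 < 1/q2 := by positivity
    have h3 : 1/q1 < 1 := by linarith
    rwa [div_lt_one hq1] at h3
  have hq2' : 1 < q2 := by
    have h1 : 0 < 1/q1 := by positivity
    have h3 : 1/q2 < 1 := by linarith
    rwa [div_lt_one hq2] at h3
  set a : ℝ := q1/q2 - q1 with hadef
  have hprod : q1 + q2 < q1*q2 := by
    have h := mul_lt_mul_of_pos_left hQ (mul_pos hq1 hq2)
    have e : q1*q2*(1/q1 + 1/q2) = q2 + q1 := by field_simp
    rw [e, mul_one] at h; linarith
  have ha : a < -1 := by
    have e : a + 1 = (q1 + q2 - q1*q2)/q2 := by rw [hadef]; field_simp; ring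
    have h := div_neg_of_neg_of_pos (by linarith : q1 + q2 - q1*q2 < 0) hq2
    rw [← e] at h; linarith
  have hprod2 : 2*q1*q2 < 2*q1 + 3*q2 := by
    have h := mul_lt_mul_of_pos_left hE (by positivity : (0:ℝ) < 2*q1*q2)
    have e : 2*q1*q2*(3/(2*q1) + 1/q2) = 3*q2 + 2*q1 := by field_simp
    rw [e, mul_one] at h; linarith
  have ha2 : (-1:ℝ) < 2*(a+1) := by
    have e : 2*(a+1) + 1 = (2*q1 + 3*q2 - 2*q1*q2)/q2 := by rw [hadef]; field_simp; ring
    have h := div_pos (by linarith : 0 < 2*q1 + 3*q2 - 2*q1*q2) hq2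
    rw [← e] at h; linarith
  set C : ℝ := 2*(1 + 1/(q2-1)) with hCdef
  have hCpos : 0 < C := by
    have : 0 < 1/(q2-1) := div_pos one_pos (by linarith)
    rw [hCdef]; linarith
  have hnega : 0 < -(a+1) := by linarith
  set K : ℝ := C * (1/(-(a+1))) with hKdef
  have hKpos : 0 < K := mul_pos hCpos (div_pos one_pos hnega)
  have hrho_nn : ∀ x y, 0 ≤ rho q1 q2 x y := fun x y => by unfold rho; positivity
  have hFnn : ∀ u v : ℝ,
      0 ≤ ∫ t in Ioc (0:ℝ) 1, ∫ s in Ioc (0:ℝ) 1, rho q1 q2 (t+u) (s-v) :=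
    fun u v => integral_nonneg fun t => integral_nonneg fun s => hrho_nn _ _
  -- key bound for small u
  have key : ∀ u : ℝ, 0 < u → ∀ v ∈ Ioc (0:ℝ) 1,
      (∫ t in Ioc (0:ℝ) 1, ∫ s in Ioc (0:ℝ) 1, rho q1 q2 (t+u) (s-v))
        ≤ K * u^(a+1) := by
    intro u hu v hv
    have hg_cont : ContinuousOn (fun t : ℝ => (t+u)^a) (Icc 0 1) := by
      apply ContinuousOn.rpow_const (by fun_prop)
      intro t ht
      exact Or.inl (by have := ht.1; positivity)
    have hg_int : IntegrableOn (fun t : ℝ => C * (t+u)^a) (Ioc 0 1) :=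
      ((continuousOn_const.mul hg_cont).integrableOn_Icc).mono_set Ioc_subset_Icc_self
    have hptw : ∀ t ∈ Ioc (0:ℝ) 1,
        (∫ s in Ioc (0:ℝ) 1, rho q1 q2 (t+u) (s-v)) ≤ C * (t+u)^a := by
      intro t ht
      have htu : 0 < t + u := by linarith [ht.1]
      have hA : 0 < |t+u|^q1 := rpow_pos_of_pos (abs_pos.mpr htu.ne') _
      have hsb := s_bound q2 v (|t+u|^q1) hq2' hA hv
      have heq : (|t+u|^q1) ^ (1/q2 - 1) = (t+u)^a := by
        rw [abs_of_pos htu, ← Real.rpow_mul htu.le]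
        congr 1
        rw [hadef]; field_simp
      calc (∫ s in Ioc (0:ℝ) 1, rho q1 q2 (t+u) (s-v))
          = ∫ s in Ioc (0:ℝ) 1, (|t+u|^q1 + |s-v|^q2)⁻¹ := rfl
        _ ≤ 2*(1+1/(q2-1)) * (|t+u|^q1)^(1/q2-1) := hsb
        _ = C * (t+u)^a := by rw [heq, hCdef]
    have step1 : (∫ t in Ioc (0:ℝ) 1, ∫ s in Ioc (0:ℝ) 1, rho q1 q2 (t+u) (s-v))
        ≤ ∫ t in Ioc (0:ℝ) 1, C * (t+u)^a := by
      apply integral_mono_of_nonneg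
        (Filter.Eventually.of_forall fun t => integral_nonneg fun s => hrho_nn _ _)
        hg_int
      exact (ae_restrict_iff' measurableSet_Ioc).2 (Filter.Eventually.of_forall hptw)
    have step2 : ∫ t in Ioc (0:ℝ) 1, C * (t+u)^a
        = C * ∫ t in Ioc (0:ℝ) 1, (t+u)^a := integral_const_mul _ _
    have step3 : ∫ t in Ioc (0:ℝ) 1, (t+u)^a = ∫ x in Ioc u (1+u), x^a := by
      rw [← intervalIntegral.integral_of_le zero_le_one,
        intervalIntegral.integral_comp_add_right (fun x => x^a) u,
        show (0:ℝ) + u = u by ring, show (1:ℝ) + u = 1 + u by ring,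
        intervalIntegral.integral_of_le (by linarith : u ≤ 1 + u)]
    have step4 : ∫ x in Ioc u (1+u), x^a ≤ ∫ x in Ioi u, x^a := by
      apply setIntegral_mono_set (integrableOn_Ioi_rpow_of_lt ha hu)
      · filter_upwards [ae_restrict_mem measurableSet_Ioi] with x hx
        exact rpow_nonneg (le_of_lt (lt_trans hu hx)) a
      · exact HasSubset.Subset.eventuallyLE Ioc_subset_Ioi_self
    have step5 : ∫ x in Ioi u, x^a = -u^(a+1)/(a+1) := integral_Ioi_rpow_of_lt ha hu
    calc (∫ t in Ioc (0:ℝ) 1, ∫ s in Ioc (0:ℝ) 1, rho q1 q2 (t+u) (s-v))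
        ≤ ∫ t in Ioc (0:ℝ) 1, C * (t+u)^a := step1
      _ = C * ∫ t in Ioc (0:ℝ) 1, (t+u)^a := step2
      _ = C * ∫ x in Ioc u (1+u), x^a := by rw [step3]
      _ ≤ C * ∫ x in Ioi u, x^a := mul_le_mul_of_nonneg_left step4 hCpos.le
      _ = C * (-u^(a+1)/(a+1)) := by rw [step5]
      _ = K * u^(a+1) := by
          have e : -u^(a+1)/(a+1) = u^(a+1) * (1/(-(a+1))) := by
            rw [mul_one_div, div_neg, neg_div]
          rw [hKdef, e]; ring
  -- crude bound for large u
  have key2 : ∀ u : ℝ, 0 < u → ∀ v : ℝ,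
      (∫ t in Ioc (0:ℝ) 1, ∫ s in Ioc (0:ℝ) 1, rho q1 q2 (t+u) (s-v))
        ≤ u^(-q1) := by
    intro u hu v
    have hconst : IntegrableOn (fun _ : ℝ => u^(-q1)) (Ioc (0:ℝ) 1) :=
      integrableOn_const (by simp [Real.volume_Ioc])
    have hptw : ∀ t ∈ Ioc (0:ℝ) 1, ∀ s : ℝ, rho q1 q2 (t+u) (s-v) ≤ u^(-q1) := by
      intro t ht s
      have htu : 0 < t + u := by linarith [ht.1]
      have h1 : 0 < u^q1 := rpow_pos_of_pos hu _
      have h2 : u^q1 ≤ |t+u|^q1 + |s-v|^q2 := by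
        have hle : u^q1 ≤ |t+u|^q1 := by
          apply rpow_le_rpow hu.le ?_ hq1.le
          rw [abs_of_pos htu]; linarith [ht.1]
        have h3 : (0:ℝ) ≤ |s-v|^q2 := by positivity
        linarith
      have h4 := inv_anti₀ h1 h2
      rw [rpow_neg hu.le]
      exact h4
    have inner_le : ∀ t ∈ Ioc (0:ℝ) 1,
        (∫ s in Ioc (0:ℝ) 1, rho q1 q2 (t+u) (s-v)) ≤ u^(-q1) := by
      intro t ht
      have h := integral_mono_of_nonneg
        (Filter.Eventually.of_forall fun s => hrho_nn (t+u) (s-v)) hconst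
        (Filter.Eventually.of_forall fun s => hptw t ht s)
      rw [setIntegral_const, measureReal_def, Real.volume_Ioc] at h
      simpa using h
    have h := integral_mono_of_nonneg
      (Filter.Eventually.of_forall fun t => integral_nonneg fun s => hrho_nn _ _) hconst
      ((ae_restrict_iff' measurableSet_Ioc).2 (Filter.Eventually.of_forall inner_le))
    rw [setIntegral_const, measureReal_def, Real.volume_Ioc] at h
    simpa using h
  -- assembly
  rw [← Ioc_union_Ioi_eq_Ioi (zero_le_one (α := ℝ)),
    lintegral_union measurableSet_Ioi (Ioc_disjoint_Ioi le_rfl)]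
  have part1 : (∫⁻ u in Ioc (0:ℝ) 1, ∫⁻ v in Ioc (0:ℝ) 1,
      ENNReal.ofReal ((∫ t in Ioc (0 : ℝ) 1, ∫ s in Ioc (0 : ℝ) 1,
        rho q1 q2 (t + u) (s - v)) ^ 2)) < ⊤ := by
    have hbound : ∀ u ∈ Ioc (0:ℝ) 1, (∫⁻ v in Ioc (0:ℝ) 1,
        ENNReal.ofReal ((∫ t in Ioc (0 : ℝ) 1, ∫ s in Ioc (0 : ℝ) 1,
          rho q1 q2 (t + u) (s - v)) ^ 2)) ≤ ENNReal.ofReal ((K * u^(a+1))^2) := by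
      intro u hu
      have h1 : (∫⁻ v in Ioc (0:ℝ) 1,
          ENNReal.ofReal ((∫ t in Ioc (0 : ℝ) 1, ∫ s in Ioc (0 : ℝ) 1,
            rho q1 q2 (t + u) (s - v)) ^ 2))
          ≤ ∫⁻ _v in Ioc (0:ℝ) 1, ENNReal.ofReal ((K * u^(a+1))^2) := by
        apply setLIntegral_mono' measurableSet_Ioc
        intro v hv
        exact ENNReal.ofReal_le_ofReal
          (pow_le_pow_left₀ (hFnn u v) (key u hu.1 v hv) 2)
      refine le_trans h1 ?_
      rw [setLIntegral_const, Real.volume_Ioc]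
      simp
    have hint : IntegrableOn (fun u : ℝ => (K * u^(a+1))^2) (Ioc (0:ℝ) 1) := by
      have base : IntegrableOn (fun u : ℝ => u^(2*(a+1))) (Ioc (0:ℝ) 1) :=
        (intervalIntegral.intervalIntegrable_rpow' ha2 (a := 0) (b := 1)).1
      have base2 : IntegrableOn (fun u : ℝ => K^2 * u^(2*(a+1))) (Ioc (0:ℝ) 1) :=
        base.const_mul _
      apply base2.congr_fun ?_ measurableSet_Ioc
      intro u hu
      have hu0 : 0 < u := hu.1
      simp only
      rw [show (2:ℝ)*(a+1) = (a+1)+(a+1) by ring, Real.rpow_add hu0]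
      ring
    calc (∫⁻ u in Ioc (0:ℝ) 1, ∫⁻ v in Ioc (0:ℝ) 1,
          ENNReal.ofReal ((∫ t in Ioc (0 : ℝ) 1, ∫ s in Ioc (0 : ℝ) 1,
            rho q1 q2 (t + u) (s - v)) ^ 2))
        ≤ ∫⁻ u in Ioc (0:ℝ) 1, ENNReal.ofReal ((K * u^(a+1))^2) :=
          setLIntegral_mono' measurableSet_Ioc hbound
      _ < ⊤ := by
          have h := hint.hasFiniteIntegral
          rwa [hasFiniteIntegral_iff_ofReal
            (Filter.Eventually.of_forall fun u => sq_nonneg _)] at h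
  have part2 : (∫⁻ u in Ioi (1:ℝ), ∫⁻ v in Ioc (0:ℝ) 1,
      ENNReal.ofReal ((∫ t in Ioc (0 : ℝ) 1, ∫ s in Ioc (0 : ℝ) 1,
        rho q1 q2 (t + u) (s - v)) ^ 2)) < ⊤ := by
    have hbound : ∀ u ∈ Ioi (1:ℝ), (∫⁻ v in Ioc (0:ℝ) 1,
        ENNReal.ofReal ((∫ t in Ioc (0 : ℝ) 1, ∫ s in Ioc (0 : ℝ) 1,
          rho q1 q2 (t + u) (s - v)) ^ 2)) ≤ ENNReal.ofReal ((u^(-q1))^2) := by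
      intro u hu
      have hu0 : (0:ℝ) < u := lt_trans one_pos hu
      have h1 : (∫⁻ v in Ioc (0:ℝ) 1,
          ENNReal.ofReal ((∫ t in Ioc (0 : ℝ) 1, ∫ s in Ioc (0 : ℝ) 1,
            rho q1 q2 (t + u) (s - v)) ^ 2))
          ≤ ∫⁻ _v in Ioc (0:ℝ) 1, ENNReal.ofReal ((u^(-q1))^2) := by
        apply setLIntegral_mono' measurableSet_Ioc
        intro v hv
        exact ENNReal.ofReal_le_ofReal
          (pow_le_pow_left₀ (hFnn u v) (key2 u hu0 v) 2)
      refine le_trans h1 ?_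
      rw [setLIntegral_const, Real.volume_Ioc]
      simp
    have hint : IntegrableOn (fun u : ℝ => (u^(-q1))^2) (Ioi (1:ℝ)) := by
      have base : IntegrableOn (fun u : ℝ => u^(-(2*q1))) (Ioi (1:ℝ)) :=
        integrableOn_Ioi_rpow_of_lt (by linarith) one_pos
      apply base.congr_fun ?_ measurableSet_Ioi
      intro u hu
      have hu0 : (0:ℝ) < u := lt_trans one_pos hu
      simp only
      rw [show -(2*q1) = (-q1)+(-q1) by ring, Real.rpow_add hu0]
      ring
    calc (∫⁻ u in Ioi (1:ℝ), ∫⁻ v in Ioc (0:ℝ) 1,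
          ENNReal.ofReal ((∫ t in Ioc (0 : ℝ) 1, ∫ s in Ioc (0 : ℝ) 1,
            rho q1 q2 (t + u) (s - v)) ^ 2))
        ≤ ∫⁻ u in Ioi (1:ℝ), ENNReal.ofReal ((u^(-q1))^2) :=
          setLIntegral_mono' measurableSet_Ioi hbound
      _ < ⊤ := by
          have h := hint.hasFiniteIntegral
          rwa [hasFiniteIntegral_iff_ofReal
            (Filter.Eventually.of_forall fun u => sq_nonneg _)] at h
  exact ENNReal.add_lt_top.mpr ⟨part1, part2⟩
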